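/- If k and l are bounded kernels whose mean embeddings of finite signed measures are injective on 𝒳 and 𝒴 respectively, then the map sending a finite signed measure θ on 𝒳 × 𝒴 of the form θ = P_{XY} - P_X ⊗ P_Y (difference of a joint law and the product of its own marginals) to ∫ ψ(y) ⊗ φ(x) dθ is injective in the sense that it vanishes only at θ = 0, even though the product kernel k·l need not have an injective mean embedding on all finite signed measures on 𝒳 × 𝒴. -/

import Mathlib

open MeasureTheory
open scoped InnerProductSpace ENNReal

/-- Bochner integral of `f` against a finite signed measure `s`, defined via the
Jordan decomposition `s = s⁺ - s⁻`. -/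
noncomputable def sInt {X E : Type*} [MeasurableSpace X] [NormedAddCommGroup E]
    [NormedSpace ℝ E] [CompleteSpace E] (s : SignedMeasure X) (f : X → E) : E :=
  (∫ x, f x ∂s.toJordanDecomposition.posPart) - ∫ x, f x ∂s.toJordanDecomposition.negPart

/-- The rank-one operator `a ⊗ b : f ↦ ⟪b, f⟫ • a`. -/
noncomputable def rank1 {F G : Type*} [NormedAddCommGroup F] [InnerProductSpace ℝ F]
    [NormedAddCommGroup G] [InnerProductSpace ℝ G] (a : G) (b : F) : F →L[ℝ] G :=
  (innerSL ℝ b).smulRight a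

open scoped NNReal

section Aux

variable {X E : Type*} [MeasurableSpace X] [NormedAddCommGroup E] [NormedSpace ℝ E]
  [CompleteSpace E]

lemma sInt_zero (g : X → E) : sInt (0 : SignedMeasure X) g = 0 := by
  simp [sInt, MeasureTheory.SignedMeasure.toJordanDecomposition_zero]

lemma sInt_measure (m : Measure X) [IsFiniteMeasure m] (g : X → E) :
    sInt m.toSignedMeasure g = ∫ x, g x ∂m := by
  have hJ : m.toSignedMeasure.toJordanDecomposition
      = { posPart := m, negPart := 0, posPart_finite := inferInstance,
          negPart_finite := inferInstance,
          mutuallySingular := Measure.MutuallySingular.zero_right } := by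
    apply MeasureTheory.JordanDecomposition.toSignedMeasure_injective
    rw [MeasureTheory.SignedMeasure.toSignedMeasure_toJordanDecomposition]
    show m.toSignedMeasure
      = m.toSignedMeasure - (0 : Measure X).toSignedMeasure
    rw [Measure.toSignedMeasure_zero, sub_zero]
  have hp : m.toSignedMeasure.toJordanDecomposition.posPart = m := by rw [hJ]
  have hq : m.toSignedMeasure.toJordanDecomposition.negPart = (0 : Measure X) := by rw [hJ]
  simp only [sInt, hp, hq, integral_zero_measure, sub_zero]

lemma integrable_of_inj (g : X → E)
    (hinj : Function.Injective (fun s : SignedMeasure X => sInt s g))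
    (m : Measure X) [IsFiniteMeasure m] : Integrable g m := by
  by_contra hni
  have h0 : sInt m.toSignedMeasure g = sInt (0 : SignedMeasure X) g := by
    rw [sInt_measure, sInt_zero, integral_undef hni]
  have hm0 : m.toSignedMeasure = 0 := hinj h0
  have hmz : m = 0 := by
    ext s hs
    have h1 : m.toSignedMeasure s = 0 := by rw [hm0]; rfl
    rw [Measure.toSignedMeasure_apply_measurable hs] at h1
    simpa [Measure.real, ENNReal.toReal_eq_zero_iff, measure_ne_top m s] using h1
  rw [hmz] at hni
  exact hni (integrable_zero_measure)

lemma sInt_sub (m n : Measure X) [IsFiniteMeasure m] [IsFiniteMeasure n] (g : X → E)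
    (hg : ∀ (m' : Measure X) [IsFiniteMeasure m'], Integrable g m') :
    sInt (m.toSignedMeasure - n.toSignedMeasure) g = (∫ x, g x ∂m) - ∫ x, g x ∂n := by
  set s := m.toSignedMeasure - n.toSignedMeasure with hs
  set p := s.toJordanDecomposition.posPart with hp
  set q := s.toJordanDecomposition.negPart with hq
  have key : p + n = m + q := by
    ext A hA
    have h1 : s A = (m A).toReal - (n A).toReal := Measure.toSignedMeasure_sub_apply hA
    have h2 : s A = (p A).toReal - (q A).toReal := by
      conv_lhs => rw [← s.toSignedMeasure_toJordanDecomposition]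
      exact Measure.toSignedMeasure_sub_apply hA
    have h4 : ((p + n) A).toReal = ((m + q) A).toReal := by
      rw [Measure.add_apply, Measure.add_apply,
        ENNReal.toReal_add (measure_ne_top _ _) (measure_ne_top _ _),
        ENNReal.toReal_add (measure_ne_top _ _) (measure_ne_top _ _)]
      linarith [h1.symm.trans h2]
    exact (ENNReal.toReal_eq_toReal_iff' (measure_ne_top _ _) (measure_ne_top _ _)).mp h4
  have e1 : (∫ x, g x ∂p) + ∫ x, g x ∂n = (∫ x, g x ∂m) + ∫ x, g x ∂q := by
    rw [← integral_add_measure (hg p) (hg n), ← integral_add_measure (hg m) (hg q), key]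
  simp only [sInt]
  exact sub_eq_sub_iff_add_eq_add.mpr e1

end Aux

theorem stmt14 {𝒳 𝒴 : Type*} [MeasurableSpace 𝒳] [TopologicalSpace 𝒳] [PolishSpace 𝒳] [BorelSpace 𝒳]
    [MeasurableSpace 𝒴] [TopologicalSpace 𝒴] [PolishSpace 𝒴] [BorelSpace 𝒴] {F G : Type*} [NormedAddCommGroup F] [InnerProductSpace ℝ F] [CompleteSpace F] [MeasurableSpace F] [BorelSpace F]
    [NormedAddCommGroup G] [InnerProductSpace ℝ G] [CompleteSpace G] [MeasurableSpace G] [BorelSpace G] (φ : 𝒳 → F) (ψ : 𝒴 → G) (hφm : Measurable φ) (hψm : Measurable ψ)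
    (Bφ Bψ : ℝ) (hφb : ∀ x, ‖φ x‖ ≤ Bφ) (hψb : ∀ y, ‖ψ y‖ ≤ Bψ)
    (hk : Function.Injective (fun μ : SignedMeasure 𝒳 => sInt μ φ)) (hl : Function.Injective (fun ν : SignedMeasure 𝒴 => sInt ν ψ))
    (P : Measure (𝒳 × 𝒴)) [IsProbabilityMeasure P]
    (θ : SignedMeasure (𝒳 × 𝒴))
    (hθ : θ = P.toSignedMeasure
      - ((P.map Prod.fst).prod (P.map Prod.snd)).toSignedMeasure)
    (hC : sInt θ (fun p => rank1 (ψ p.2) (φ p.1)) = 0) :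
    θ = 0 := by
  classical
  set μ := θ.toJordanDecomposition.posPart with hμdef
  set η := θ.toJordanDecomposition.negPart with hηdef
  have hθdec : θ = μ.toSignedMeasure - η.toSignedMeasure := by
    conv_lhs => rw [← θ.toSignedMeasure_toJordanDecomposition]
    rfl
  -- integrability of φ and ψ w.r.t. every finite measure
  have hφint : ∀ (m : Measure 𝒳) [IsFiniteMeasure m], Integrable φ m :=
    fun m _ => integrable_of_inj φ hk m
  have hψint : ∀ (m : Measure 𝒴) [IsFiniteMeasure m], Integrable ψ m :=
    fun m _ => integrable_of_inj ψ hl m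
  have hφae : ∀ (m : Measure (𝒳 × 𝒴)) [IsFiniteMeasure m],
      AEStronglyMeasurable (fun p : 𝒳 × 𝒴 => φ p.1) m := by
    intro m _
    haveI := m.isFiniteMeasure_map Prod.fst
    exact (hφint (m.map Prod.fst)).aestronglyMeasurable.comp_aemeasurable
      measurable_fst.aemeasurable
  have hψae : ∀ (m : Measure (𝒳 × 𝒴)) [IsFiniteMeasure m],
      AEStronglyMeasurable (fun p : 𝒳 × 𝒴 => ψ p.2) m := by
    intro m _
    haveI := m.isFiniteMeasure_map Prod.snd
    exact (hψint (m.map Prod.snd)).aestronglyMeasurable.comp_aemeasurable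
      measurable_snd.aemeasurable
  -- integrability of the rank-one field
  have hRint : ∀ (m : Measure (𝒳 × 𝒴)) [IsFiniteMeasure m],
      Integrable (fun p : 𝒳 × 𝒴 => rank1 (ψ p.2) (φ p.1)) m := by
    intro m _
    have h1 : AEStronglyMeasurable (fun p : 𝒳 × 𝒴 => (innerSL ℝ (φ p.1), ψ p.2)) m :=
      ((innerSL ℝ).continuous.comp_aestronglyMeasurable (hφae m)).prodMk (hψae m)
    have hcont : Continuous fun q : (F →L[ℝ] ℝ) × G => q.1.smulRight q.2 :=
      isBoundedBilinearMap_smulRight.continuous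
    have haesm0 : AEStronglyMeasurable ((fun q : (F →L[ℝ] ℝ) × G => q.1.smulRight q.2) ∘
        (fun p : 𝒳 × 𝒴 => (innerSL ℝ (φ p.1), ψ p.2))) m :=
      hcont.comp_aestronglyMeasurable h1
    have haesm : AEStronglyMeasurable (fun p : 𝒳 × 𝒴 => rank1 (ψ p.2) (φ p.1)) m := by
      simpa only [rank1, Function.comp_def] using haesm0
    refine Integrable.mono' (integrable_const (Bφ * Bψ)) haesm (ae_of_all _ fun p => ?_)
    rw [rank1, ContinuousLinearMap.norm_smulRight_apply, innerSL_apply_norm]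
    exact mul_le_mul (hφb _) (hψb _) (norm_nonneg _) ((norm_nonneg (φ p.1)).trans (hφb _))
  have hCR : (∫ p, rank1 (ψ p.2) (φ p.1) ∂μ) = ∫ p, rank1 (ψ p.2) (φ p.1) ∂η :=
    sub_eq_zero.mp (by simpa only [sInt] using hC)
  -- helper : integrability of bounded measurable scalar functions
  have hscint : ∀ (d : 𝒳 × 𝒴 → ℝ) (C : ℝ), Measurable d → (∀ p, |d p| ≤ C) →
      ∀ (m : Measure (𝒳 × 𝒴)) [IsFiniteMeasure m], Integrable d m := by
    intro d C hdm hdb m _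
    exact Integrable.mono' (integrable_const C) hdm.aestronglyMeasurable
      (ae_of_all _ fun p => by simpa using hdb p)
  -- helper : integrability of scalar multiples of ψ ∘ snd
  have hψsint : ∀ (d : 𝒳 × 𝒴 → ℝ) (C : ℝ), Measurable d → (∀ p, |d p| ≤ C) →
      ∀ (m : Measure (𝒳 × 𝒴)) [IsFiniteMeasure m],
        Integrable (fun p => d p • ψ p.2) m := by
    intro d C hdm hdb m _
    refine Integrable.mono' (integrable_const (C * Bψ))
      (hdm.aestronglyMeasurable.smul (hψae m)) (ae_of_all _ fun p => ?_)
    rw [norm_smul]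
    exact mul_le_mul (by simpa using hdb p) (hψb _) (norm_nonneg _)
      ((abs_nonneg _).trans (hdb p))
  -- helper : integral of ψ against mapped with-density measures
  have hwd : ∀ (d : 𝒳 × 𝒴 → ℝ≥0) (_ : Measurable d) (m : Measure (𝒳 × 𝒴))
      [IsFiniteMeasure m]
      [IsFiniteMeasure ((m.withDensity fun p => (d p : ℝ≥0∞)).map Prod.snd)],
      ∫ y, ψ y ∂((m.withDensity fun p => (d p : ℝ≥0∞)).map Prod.snd)
        = ∫ p, (d p : ℝ) • ψ p.2 ∂m := by
    intro d hdm m _ _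
    rw [integral_map measurable_snd.aemeasurable (hψint _).aestronglyMeasurable,
      integral_withDensity_eq_integral_smul hdm]
    simp [NNReal.smul_def]
  -- STAGE 1
  have stage1 : ∀ (f : F) (B : Set 𝒴), MeasurableSet B →
      ∫ p in Prod.snd ⁻¹' B, ⟪f, φ p.1⟫_ℝ ∂μ = ∫ p in Prod.snd ⁻¹' B, ⟪f, φ p.1⟫_ℝ ∂η := by
    intro f B hB
    set S : Set (𝒳 × 𝒴) := Prod.snd ⁻¹' B with hSdef
    have hSm : MeasurableSet S := measurable_snd hB
    set c : 𝒳 × 𝒴 → ℝ := fun p => ⟪f, φ p.1⟫_ℝ with hcdef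
    have hcm : Measurable c := by
      have hcont : Continuous fun v : F => ⟪f, v⟫_ℝ := continuous_const.inner continuous_id
      exact hcont.measurable.comp (hφm.comp measurable_fst)
    have hcb : ∀ p, |c p| ≤ ‖f‖ * Bφ := fun p =>
      (abs_real_inner_le_norm f (φ p.1)).trans
        (mul_le_mul_of_nonneg_left (hφb _) (norm_nonneg f))
    -- the vector-valued identity obtained by applying hC to f
    have happ : ∫ p, c p • ψ p.2 ∂μ = ∫ p, c p • ψ p.2 ∂η := by
      have e1 : (∫ p, rank1 (ψ p.2) (φ p.1) ∂μ) f = (∫ p, rank1 (ψ p.2) (φ p.1) ∂η) f := by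
        rw [hCR]
      rw [ContinuousLinearMap.integral_apply (hRint μ) f,
        ContinuousLinearMap.integral_apply (hRint η) f] at e1
      simpa only [rank1, ContinuousLinearMap.smulRight_apply, innerSL_apply_apply,
        real_inner_comm, hcdef] using e1
    -- bounds for the positive/negative parts
    have hmaxb : ∀ p, |max (c p) 0| ≤ ‖f‖ * Bφ := fun p => by
      rw [abs_of_nonneg (le_max_right _ _)]
      exact (max_le (le_abs_self _) (abs_nonneg _)).trans (hcb p)
    have hmaxb' : ∀ p, |max (-c p) 0| ≤ ‖f‖ * Bφ := fun p => by
      rw [abs_of_nonneg (le_max_right _ _)]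
      exact (max_le (neg_le_abs _) (abs_nonneg _)).trans (hcb p)
    have hmaxm : Measurable fun p => max (c p) 0 := hcm.max measurable_const
    have hmaxm' : Measurable fun p => max (-c p) 0 := hcm.neg.max measurable_const
    -- the four finite measures
    have hnpm : Measurable fun p => Real.toNNReal (c p) :=
      measurable_real_toNNReal.comp hcm
    have hnnm : Measurable fun p => Real.toNNReal (-c p) :=
      measurable_real_toNNReal.comp hcm.neg
    have hfin : ∀ (d : 𝒳 × 𝒴 → ℝ≥0), Measurable d →
        (∀ p, (d p : ℝ) ≤ ‖f‖ * Bφ) →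
        ∀ (m : Measure (𝒳 × 𝒴)) [IsFiniteMeasure m],
        IsFiniteMeasure (m.withDensity fun p => (d p : ℝ≥0∞)) := by
      intro d hdm hdb m _
      refine isFiniteMeasure_withDensity (ne_of_lt ?_)
      calc ∫⁻ p, (d p : ℝ≥0∞) ∂m
          ≤ ∫⁻ _, ENNReal.ofReal (‖f‖ * Bφ) ∂m := by
            refine lintegral_mono fun p => ?_
            rw [show ((d p : ℝ≥0∞)) = ENNReal.ofReal (d p : ℝ) by
              simp [ENNReal.ofReal_coe_nnreal]]
            exact ENNReal.ofReal_le_ofReal (hdb p)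
        _ = ENNReal.ofReal (‖f‖ * Bφ) * m Set.univ := lintegral_const _
        _ < ⊤ := ENNReal.mul_lt_top ENNReal.ofReal_lt_top (measure_lt_top m _)
    have hdb1 : ∀ p, ((Real.toNNReal (c p) : ℝ≥0) : ℝ) ≤ ‖f‖ * Bφ := fun p => by
      rw [Real.coe_toNNReal']
      exact (max_le (le_abs_self _) (abs_nonneg _)).trans (hcb p)
    have hdb2 : ∀ p, ((Real.toNNReal (-c p) : ℝ≥0) : ℝ) ≤ ‖f‖ * Bφ := fun p => by
      rw [Real.coe_toNNReal']
      exact (max_le (neg_le_abs _) (abs_nonneg _)).trans (hcb p)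
    haveI i1 : IsFiniteMeasure (μ.withDensity fun p => ((Real.toNNReal (c p) : ℝ≥0) : ℝ≥0∞)) :=
      hfin _ hnpm hdb1 μ
    haveI i2 : IsFiniteMeasure (η.withDensity fun p => ((Real.toNNReal (-c p) : ℝ≥0) : ℝ≥0∞)) :=
      hfin _ hnnm hdb2 η
    haveI i3 : IsFiniteMeasure (μ.withDensity fun p => ((Real.toNNReal (-c p) : ℝ≥0) : ℝ≥0∞)) :=
      hfin _ hnnm hdb2 μ
    haveI i4 : IsFiniteMeasure (η.withDensity fun p => ((Real.toNNReal (c p) : ℝ≥0) : ℝ≥0∞)) :=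
      hfin _ hnpm hdb1 η
    set a1 := (μ.withDensity fun p => ((Real.toNNReal (c p) : ℝ≥0) : ℝ≥0∞)).map Prod.snd with ha1
    set a2 := (η.withDensity fun p => ((Real.toNNReal (-c p) : ℝ≥0) : ℝ≥0∞)).map Prod.snd with ha2
    set b1 := (μ.withDensity fun p => ((Real.toNNReal (-c p) : ℝ≥0) : ℝ≥0∞)).map Prod.snd with hb1
    set b2 := (η.withDensity fun p => ((Real.toNNReal (c p) : ℝ≥0) : ℝ≥0∞)).map Prod.snd with hb2
    haveI j1 : IsFiniteMeasure a1 := Measure.isFiniteMeasure_map _ _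
    haveI j2 : IsFiniteMeasure a2 := Measure.isFiniteMeasure_map _ _
    haveI j3 : IsFiniteMeasure b1 := Measure.isFiniteMeasure_map _ _
    haveI j4 : IsFiniteMeasure b2 := Measure.isFiniteMeasure_map _ _
    -- the signed measure on 𝒴 is zero
    have hν : (a1 + a2).toSignedMeasure - (b1 + b2).toSignedMeasure = 0 := by
      apply hl
      show sInt _ ψ = sInt 0 ψ
      rw [sInt_sub _ _ ψ (fun m' _ => hψint m'), sInt_zero,
        integral_add_measure (hψint _) (hψint _), integral_add_measure (hψint _) (hψint _),
        ha1, ha2, hb1, hb2, hwd _ hnpm μ, hwd _ hnnm η, hwd _ hnnm μ, hwd _ hnpm η]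
      simp only [Real.coe_toNNReal']
      have k1 : (∫ p, max (c p) 0 • ψ p.2 ∂μ) - ∫ p, max (-c p) 0 • ψ p.2 ∂μ
          = ∫ p, c p • ψ p.2 ∂μ := by
        rw [← integral_sub (hψsint _ _ hmaxm hmaxb μ) (hψsint _ _ hmaxm' hmaxb' μ)]
        refine integral_congr_ae (ae_of_all _ fun p => ?_)
        simp only [← sub_smul, max_zero_sub_eq_self]
      have k2 : (∫ p, max (c p) 0 • ψ p.2 ∂η) - ∫ p, max (-c p) 0 • ψ p.2 ∂η
          = ∫ p, c p • ψ p.2 ∂η := by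
        rw [← integral_sub (hψsint _ _ hmaxm hmaxb η) (hψsint _ _ hmaxm' hmaxb' η)]
        refine integral_congr_ae (ae_of_all _ fun p => ?_)
        simp only [← sub_smul, max_zero_sub_eq_self]
      have k3 : (∫ p, max (c p) 0 • ψ p.2 ∂μ) - ∫ p, max (-c p) 0 • ψ p.2 ∂μ
          = (∫ p, max (c p) 0 • ψ p.2 ∂η) - ∫ p, max (-c p) 0 • ψ p.2 ∂η := by
        rw [k1, k2, happ]
      have k4 := sub_eq_sub_iff_add_eq_add.mp k3
      rw [sub_eq_zero, k4, add_comm]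
    -- evaluate at B
    have hB0 : ((a1 + a2) B).toReal = ((b1 + b2) B).toReal := by
      have h := congrArg (fun v : SignedMeasure 𝒴 => v B) hν
      simp only [VectorMeasure.sub_apply, VectorMeasure.zero_apply] at h
      rw [Measure.toSignedMeasure_apply_measurable hB,
        Measure.toSignedMeasure_apply_measurable hB] at h
      simp only [Measure.real] at h
      linarith [h]
    -- convert to real set-integrals
    have hreal : ∀ (d : 𝒳 × 𝒴 → ℝ≥0) (_ : Measurable d) (m : Measure (𝒳 × 𝒴))
        [IsFiniteMeasure m],
        (((m.withDensity fun p => (d p : ℝ≥0∞)).map Prod.snd) B).toReal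
          = ∫ p in S, (d p : ℝ) ∂m := by
      intro d hdm m _
      rw [Measure.map_apply measurable_snd hB, withDensity_apply _ hSm,
        ← integral_toReal (hdm.coe_nnreal_ennreal.aemeasurable)
          (ae_of_all _ fun p => ENNReal.coe_lt_top)]
      simp
    rw [Measure.add_apply, Measure.add_apply,
      ENNReal.toReal_add (measure_ne_top _ _) (measure_ne_top _ _),
      ENNReal.toReal_add (measure_ne_top _ _) (measure_ne_top _ _),
      ha1, ha2, hb1, hb2, hreal _ hnpm μ, hreal _ hnnm η, hreal _ hnnm μ, hreal _ hnpm η] at hB0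
    simp only [Real.coe_toNNReal'] at hB0
    -- recombine
    have m1 : ∫ p in S, c p ∂μ
        = (∫ p in S, max (c p) 0 ∂μ) - ∫ p in S, max (-c p) 0 ∂μ := by
      rw [← integral_sub (hscint _ _ hmaxm hmaxb (μ.restrict S))
        (hscint _ _ hmaxm' hmaxb' (μ.restrict S))]
      refine integral_congr_ae (ae_of_all _ fun p => ?_)
      simp only [max_zero_sub_eq_self]
    have m2 : ∫ p in S, c p ∂η
        = (∫ p in S, max (c p) 0 ∂η) - ∫ p in S, max (-c p) 0 ∂η := by
      rw [← integral_sub (hscint _ _ hmaxm hmaxb (η.restrict S))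
        (hscint _ _ hmaxm' hmaxb' (η.restrict S))]
      refine integral_congr_ae (ae_of_all _ fun p => ?_)
      simp only [max_zero_sub_eq_self]
    rw [m1, m2]
    linarith [hB0]
  -- STAGE 2 : μ and η agree on rectangles
  have stage2 : ∀ (B : Set 𝒴), MeasurableSet B → ∀ (A : Set 𝒳), MeasurableSet A →
      μ (A ×ˢ B) = η (A ×ˢ B) := by
    intro B hB
    set S : Set (𝒳 × 𝒴) := Prod.snd ⁻¹' B with hSdef
    have hSm : MeasurableSet S := measurable_snd hB
    set mB := (μ.restrict S).map Prod.fst with hmB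
    set nB := (η.restrict S).map Prod.fst with hnB
    haveI : IsFiniteMeasure mB := Measure.isFiniteMeasure_map _ _
    haveI : IsFiniteMeasure nB := Measure.isFiniteMeasure_map _ _
    have hφc : ∀ (m : Measure (𝒳 × 𝒴)) [IsFiniteMeasure m],
        Integrable (fun p : 𝒳 × 𝒴 => φ p.1) m := fun m _ =>
      Integrable.mono' (integrable_const Bφ) (hφae m) (ae_of_all _ fun p => hφb _)
    have h2 : ∫ x, φ x ∂mB = ∫ p in S, φ p.1 ∂μ := by
      rw [hmB, integral_map measurable_fst.aemeasurable (hφint _).aestronglyMeasurable]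
    have h2' : ∫ x, φ x ∂nB = ∫ p in S, φ p.1 ∂η := by
      rw [hnB, integral_map measurable_fst.aemeasurable (hφint _).aestronglyMeasurable]
    have hv : (∫ p in S, φ p.1 ∂μ) = ∫ p in S, φ p.1 ∂η := by
      refine ext_inner_left ℝ fun f => ?_
      rw [← integral_inner (hφc (μ.restrict S)) f, ← integral_inner (hφc (η.restrict S)) f]
      exact stage1 f B hB
    have hσ : mB.toSignedMeasure - nB.toSignedMeasure = 0 := by
      apply hk
      show sInt _ φ = sInt 0 φ
      rw [sInt_sub _ _ φ (fun m' _ => hφint m'), sInt_zero, h2, h2', hv, sub_self]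
    intro A hA
    have hA0 : (mB A).toReal = (nB A).toReal := by
      have h := congrArg (fun v : SignedMeasure 𝒳 => v A) hσ
      simp only [VectorMeasure.sub_apply, VectorMeasure.zero_apply] at h
      rw [Measure.toSignedMeasure_apply_measurable hA,
        Measure.toSignedMeasure_apply_measurable hA] at h
      simp only [Measure.real] at h
      linarith [h]
    have hAB : mB A = nB A :=
      (ENNReal.toReal_eq_toReal_iff' (measure_ne_top _ _) (measure_ne_top _ _)).mp hA0
    have e1 : mB A = μ (A ×ˢ B) := by
      rw [hmB, Measure.map_apply measurable_fst hA, Measure.restrict_apply (measurable_fst hA),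
        hSdef, Set.prod_eq]
    have e2 : nB A = η (A ×ˢ B) := by
      rw [hnB, Measure.map_apply measurable_fst hA, Measure.restrict_apply (measurable_fst hA),
        hSdef, Set.prod_eq]
    rw [← e1, ← e2]; exact hAB
  -- STAGE 3 : μ = η
  have hμη : μ = η := by
    refine ext_of_generate_finite _ generateFrom_prod.symm isPiSystem_prod ?_ ?_
    · rintro _ ⟨A, hA, B, hB, rfl⟩
      exact stage2 B hB A hA
    · simpa [Set.univ_prod_univ] using stage2 Set.univ .univ Set.univ .univ
  rw [hθdec, Measure.toSignedMeasure_congr hμη, sub_self]
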